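/- Let M, K be positive integers, R̂ ∈ ℂ^{M×M} Hermitian, and Ĉ_1, …, Ĉ_K ∈ ℂ^{M×M} Hermitian positive semidefinite matrices such that R̂ − Σ_{k=1}^K Ĉ_k is positive semidefinite. Let h_1, …, h_K ∈ ℂ^M satisfy h_kᴴ Ĉ_k h_k > 0 for each k, and define c̃_k = Ĉ_k h_k / √(h_kᴴ Ĉ_k h_k) and C̃_k = c̃_k c̃_kᴴ. Then R̂ − Σ_{k=1}^K C̃_k is positive semidefinite. -/

import Mathlib

open Matrix ComplexOrder

lemma cs_dot {n : ℕ} (u v : Fin n → ℂ) :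
    Complex.normSq (star u ⬝ᵥ v) ≤ (star u ⬝ᵥ u).re * (star v ⬝ᵥ v).re := by
  let u' : EuclideanSpace ℂ (Fin n) := (WithLp.equiv 2 _).symm u
  let v' : EuclideanSpace ℂ (Fin n) := (WithLp.equiv 2 _).symm v
  have h := inner_mul_inner_self_le (𝕜 := ℂ) u' v'
  have h1 : inner ℂ u' v' = star u ⬝ᵥ v := by rw [dotProduct_comm]; rfl
  have h2 : inner ℂ v' u' = star v ⬝ᵥ u := by rw [dotProduct_comm]; rfl
  have h3 : star v ⬝ᵥ u = star (star u ⬝ᵥ v) := star_dotProduct v u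
  have h4 : inner ℂ u' u' = star u ⬝ᵥ u := by rw [dotProduct_comm]; rfl
  have h5 : inner ℂ v' v' = star v ⬝ᵥ v := by rw [dotProduct_comm]; rfl
  rw [h1, h2, h3, h4, h5] at h
  simpa [Complex.normSq_eq_norm_sq, sq] using h

lemma key_sub {n : ℕ} (C : Matrix (Fin n) (Fin n) ℂ) (hC : C.PosSemidef)
    (h : Fin n → ℂ) (hpos : 0 < (star h ⬝ᵥ C.mulVec h).re) :
    (C - vecMulVec (((Real.sqrt ((star h ⬝ᵥ C.mulVec h).re) : ℂ))⁻¹ • C.mulVec h)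
      (star (((Real.sqrt ((star h ⬝ᵥ C.mulVec h).re) : ℂ))⁻¹ • C.mulVec h))).PosSemidef := by
  set α : ℝ := (star h ⬝ᵥ C.mulVec h).re with hα
  set c : Fin n → ℂ := ((Real.sqrt α : ℂ))⁻¹ • C.mulVec h with hcdef
  rw [posSemidef_iff_dotProduct_mulVec]
  constructor
  · refine hC.isHermitian.sub ?_
    ext i j
    simp [conjTranspose_apply, vecMulVec_apply, mul_comm]
  · intro x
    obtain ⟨B, hB⟩ : ∃ B : Matrix (Fin n) (Fin n) ℂ, C = Bᴴ * B := by
      open scoped MatrixOrder in exact CStarAlgebra.nonneg_iff_eq_star_mul_self.mp hC.nonneg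
    set z : ℂ := star x ⬝ᵥ C.mulVec h with hz
    set w : ℂ := star x ⬝ᵥ C.mulVec x with hw
    -- quadratic form of vecMulVec
    have hquad : star x ⬝ᵥ (vecMulVec c (star c)).mulVec x
        = (star x ⬝ᵥ c) * star (star x ⬝ᵥ c) := by
      have h0 : (vecMulVec c (star c)).mulVec x = fun i => c i * (star c ⬝ᵥ x) := by
        funext i
        simp [vecMulVec_apply, mulVec, dotProduct, Finset.mul_sum, mul_assoc]
      have h3 : star c ⬝ᵥ x = star (star x ⬝ᵥ c) := star_dotProduct c x
      rw [h0]
      have : star x ⬝ᵥ (fun i => c i * (star c ⬝ᵥ x)) = (star x ⬝ᵥ c) * (star c ⬝ᵥ x) := by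
        simp [dotProduct, Finset.sum_mul, mul_assoc]
      rw [this, h3]
    have hxc : star x ⬝ᵥ c = ((Real.sqrt α : ℂ))⁻¹ * z := by
      rw [hcdef, dotProduct_smul, smul_eq_mul]
    have hquad2 : star x ⬝ᵥ (vecMulVec c (star c)).mulVec x
        = ((α⁻¹ * Complex.normSq z : ℝ) : ℂ) := by
      rw [hquad, hxc]
      have hs : ((Real.sqrt α : ℂ)) * ((Real.sqrt α : ℂ)) = (α : ℂ) := by
        rw [← Complex.ofReal_mul, Real.mul_self_sqrt hpos.le]
      have h1 : star (((Real.sqrt α : ℂ))⁻¹ * z) = ((Real.sqrt α : ℂ))⁻¹ * star z := by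
        simp [Complex.star_def]
      rw [h1]
      have h2 : ((Real.sqrt α : ℂ))⁻¹ * z * (((Real.sqrt α : ℂ))⁻¹ * star z)
          = ((Real.sqrt α : ℂ) * (Real.sqrt α : ℂ))⁻¹ * (z * star z) := by
        rw [mul_inv]; ring
      rw [h2, hs, Complex.star_def, Complex.mul_conj]
      push_cast
      ring
    have hgen : ∀ a b : Fin n → ℂ,
        star a ⬝ᵥ C.mulVec b = star (B.mulVec a) ⬝ᵥ (B.mulVec b) := by
      intro a b
      rw [hB, ← mulVec_mulVec, dotProduct_mulVec, ← star_mulVec]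
    have hcs := cs_dot (B.mulVec x) (B.mulVec h)
    rw [← hgen x h, ← hgen x x, ← hgen h h] at hcs
    have hw0 : 0 ≤ w := hC.dotProduct_mulVec_nonneg x
    have hwim : w.im = 0 := by
      rw [Complex.le_def] at hw0; simpa using hw0.2.symm
    have hwre : w = ((w.re : ℝ) : ℂ) := by
      apply Complex.ext <;> simp [hwim]
    have hreal : α⁻¹ * Complex.normSq z ≤ w.re := by
      rw [inv_mul_le_iff₀ hpos]
      calc Complex.normSq z ≤ w.re * α := hcs
        _ = α * w.re := mul_comm _ _
    have hfin : star x ⬝ᵥ (C - vecMulVec c (star c)).mulVec x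
        = ((w.re - α⁻¹ * Complex.normSq z : ℝ) : ℂ) := by
      rw [sub_mulVec, dotProduct_sub, hquad2, ← hw]
      rw [hwre]
      push_cast
      simp only [Complex.ofReal_re]
    rw [hfin]
    rw [Complex.zero_le_real]
    linarith

/-- Feasibility of the recovered rank-one solution: if `R̂ − Σ_k Ĉ_k ⪰ 0` and
`c̃_k = Ĉ_k h_k / √(h_kᴴ Ĉ_k h_k)`, then `R̂ − Σ_k c̃_k c̃_kᴴ ⪰ 0`. -/
theorem recovered_solution_feasible
    (M K : ℕ) (hM : 0 < M) (hK : 0 < K)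
    (R : Matrix (Fin M) (Fin M) ℂ) (hR : R.IsHermitian)
    (C : Fin K → Matrix (Fin M) (Fin M) ℂ) (hC : ∀ k, (C k).PosSemidef)
    (hRC : (R - ∑ k, C k).PosSemidef)
    (h : Fin K → Fin M → ℂ)
    (hpos : ∀ k, 0 < (star (h k) ⬝ᵥ (C k).mulVec (h k)).re)
    (c : Fin K → Fin M → ℂ)
    (hc : ∀ k, c k = ((Real.sqrt ((star (h k) ⬝ᵥ (C k).mulVec (h k)).re) : ℂ))⁻¹ •
        (C k).mulVec (h k)) :
    (R - ∑ k, vecMulVec (c k) (star (c k))).PosSemidef := by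
  have hkey : ∀ k, (C k - vecMulVec (c k) (star (c k))).PosSemidef := by
    intro k
    rw [hc k]
    exact key_sub (C k) (hC k) (h k) (hpos k)
  have hsum : (∑ k, (C k - vecMulVec (c k) (star (c k)))).PosSemidef := by
    exact Finset.sum_induction _ Matrix.PosSemidef (fun A B hA hB => hA.add hB)
      Matrix.PosSemidef.zero (fun k _ => hkey k)
  have heq : R - ∑ k, vecMulVec (c k) (star (c k))
      = (R - ∑ k, C k) + ∑ k, (C k - vecMulVec (c k) (star (c k))) := by
    rw [Finset.sum_sub_distrib]
    abel
  rw [heq]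
  exact hRC.add hsum
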